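/- Let g(x) with g(0)=1, and let A(x) be the power series such that g(x) = A(x·g(x)) (the A-sequence generating function). Write a_i = [xⁱ]A(x) with a_0 = 1. Then for n ≥ 1, m ≥ 1: [xⁿ]g(x)^m = Σ over tuples (m_1,...,m_n) of nonnegative integers with Σ i·m_i = n of [m·(m+n)_q / ((m+n)·m_1!·m_2!···m_n!)]·a_1^{m_1}···a_n^{m_n}, where q = Σ m_i and (m+n)_q = (m+n)(m+n-1)···(m+n-q+1). -/

import Mathlib

open PowerSeries Finset

/-- Substitution of the power series `g` (with zero constant term) into `f`. -/
noncomputable def pscomp (f g : PowerSeries ℚ) : PowerSeries ℚ :=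
  PowerSeries.mk fun N => ∑ n ∈ Finset.range (N + 1), coeff n f * coeff N (g ^ n)

lemma coeff_Xg_pow (g : PowerSeries ℚ) (p n : ℕ) :
    coeff p ((X * g) ^ n) = if n ≤ p then coeff (p - n) (g ^ n) else 0 := by
  rw [mul_pow, coeff_X_pow_mul']

lemma coeff_Xg_pow_of_lt (g : PowerSeries ℚ) {p n : ℕ} (h : p < n) :
    coeff p ((X * g) ^ n) = 0 := by
  rw [coeff_Xg_pow, if_neg (by omega)]

lemma coeff_aeval (g : PowerSeries ℚ) (P : Polynomial ℚ) (N : ℕ) :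
    coeff N (Polynomial.aeval (X * g) P) =
      ∑ j ∈ range (N + 1), P.coeff j * coeff N ((X * g) ^ j) := by
  set M := max (N + 1) (P.natDegree + 1) with hM
  rw [Polynomial.aeval_eq_sum_range' (n := M) (lt_of_lt_of_le (Nat.lt_succ_self _) (le_max_right _ _)), map_sum]
  rw [← Finset.sum_subset (h := Finset.range_subset_range.2 (le_max_left (N+1) _))]
  · exact Finset.sum_congr rfl fun j _ => by rw [coeff_smul, smul_eq_mul]
  · intro j hj hj'
    simp only [mem_range] at hj hj'
    rw [coeff_smul, coeff_Xg_pow_of_lt g (by omega), smul_zero]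

lemma coeff_pscomp (f g : PowerSeries ℚ) (N : ℕ) :
    coeff N (pscomp f g) = ∑ n ∈ range (N + 1), coeff n f * coeff N (g ^ n) := by
  simp [pscomp]

lemma coeff_pscomp_eq_aeval (f g : PowerSeries ℚ) (N : ℕ) :
    coeff N (pscomp f (X * g)) =
      coeff N (Polynomial.aeval (X * g) (trunc (N + 1) f)) := by
  rw [coeff_pscomp, coeff_aeval]
  refine Finset.sum_congr rfl fun j hj => ?_
  rw [coeff_trunc, if_pos (mem_range.1 hj)]

lemma trunc_mul_coeff (u v : PowerSeries ℚ) {N j : ℕ} (hj : j ≤ N) :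
    (trunc (N + 1) (u * v)).coeff j =
      (trunc (N + 1) u * trunc (N + 1) v).coeff j := by
  rw [coeff_trunc, if_pos (by omega), PowerSeries.coeff_mul, Polynomial.coeff_mul]
  refine Finset.sum_congr rfl fun x hx => ?_
  rw [Finset.HasAntidiagonal.mem_antidiagonal] at hx
  rw [coeff_trunc, coeff_trunc, if_pos (by omega), if_pos (by omega)]

lemma pscomp_mul (g u v : PowerSeries ℚ) :
    pscomp (u * v) (X * g) = pscomp u (X * g) * pscomp v (X * g) := by
  ext N
  rw [coeff_pscomp_eq_aeval, PowerSeries.coeff_mul]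
  have key : ∀ w : PowerSeries ℚ, ∀ p, p ≤ N →
      coeff p (pscomp w (X * g)) =
        coeff p (Polynomial.aeval (X * g) (trunc (N + 1) w)) := by
    intro w p hp
    rw [coeff_pscomp, coeff_aeval]
    refine Finset.sum_congr rfl fun j hj => ?_
    rw [coeff_trunc, if_pos (by have := mem_range.1 hj; omega)]
  have h1 : coeff N (Polynomial.aeval (X * g) (trunc (N + 1) (u * v))) =
      coeff N (Polynomial.aeval (X * g) (trunc (N + 1) u * trunc (N + 1) v)) := by
    rw [coeff_aeval, coeff_aeval]
    exact Finset.sum_congr rfl fun j hj =>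
      by rw [trunc_mul_coeff u v (by have := mem_range.1 hj; omega)]
  rw [h1, map_mul, PowerSeries.coeff_mul]
  refine Finset.sum_congr rfl fun x hx => ?_
  rw [Finset.HasAntidiagonal.mem_antidiagonal] at hx
  rw [← key u x.1 (by omega), ← key v x.2 (by omega)]

lemma pscomp_one (g : PowerSeries ℚ) : pscomp 1 (X * g) = 1 := by
  ext N
  rw [coeff_pscomp]
  rw [Finset.sum_eq_single 0]
  · simp
  · intro b hb hb0
    rw [PowerSeries.coeff_one, if_neg hb0, zero_mul]
  · simp

lemma pscomp_pow (g u : PowerSeries ℚ) (k : ℕ) :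
    pscomp (u ^ k) (X * g) = (pscomp u (X * g)) ^ k := by
  induction k with
  | zero => simpa using pscomp_one g
  | succ k ih => rw [pow_succ, pow_succ, pscomp_mul, ih]

lemma coeff_smulpow (M : ℕ) (w : PowerSeries ℚ) (i : ℕ) :
    coeff i ((M • w : PowerSeries ℚ)) = M * coeff i w := by
  rw [map_nsmul, nsmul_eq_mul]

lemma lagrange (g A : PowerSeries ℚ) (hg0 : constantCoeff g = 1)
    (hA0 : constantCoeff A = 1) (hA : g = pscomp A (X * g)) :
    ∀ p k : ℕ, 1 ≤ k →
      ((p : ℚ) + k) * coeff p (g ^ k) = (k : ℚ) * coeff p (A ^ (p + k)) := by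
  intro p
  induction p using Nat.strong_induction_on with
  | _ p IH =>
  intro k hk
  rcases Nat.eq_zero_or_pos p with rfl | hp
  · simp only [Nat.cast_zero, zero_add, coeff_zero_eq_constantCoeff, map_pow, hg0, hA0, one_pow]
  -- p ≥ 1
  have hgk : g ^ k = pscomp (A ^ k) (X * g) := by rw [pscomp_pow, ← hA]
  have step1 : coeff p (g ^ k) =
      ∑ j ∈ range (p + 1), coeff j (A ^ k) * coeff (p - j) (g ^ j) := by
    rw [hgk, coeff_pscomp]
    refine Finset.sum_congr rfl fun j hj => ?_
    rw [coeff_Xg_pow, if_pos (by have := mem_range.1 hj; omega)]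
  have step2 : (p : ℚ) * coeff p (g ^ k) =
      ∑ j ∈ range (p + 1), coeff j (A ^ k) * ((j : ℚ) * coeff (p - j) (A ^ p)) := by
    rw [step1, Finset.mul_sum]
    refine Finset.sum_congr rfl fun j hj => ?_
    rcases Nat.eq_zero_or_pos j with rfl | hj1
    · simp only [pow_zero, PowerSeries.coeff_one, Nat.cast_zero, zero_mul, mul_zero]
      rw [if_neg (by omega : ¬ p - 0 = 0)]
      ring
    · have hjp : j ≤ p := by have := mem_range.1 hj; omega
      have := IH (p - j) (by omega) j hj1
      rw [(by omega : p - j + j = p)] at this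
      have hcast : ((p - j : ℕ) : ℚ) + (j : ℚ) = (p : ℚ) := by
        push_cast [Nat.cast_sub hjp]; ring
      rw [hcast] at this
      rw [mul_left_comm, this, mul_left_comm]
  -- rewrite as coefficient of derivative product
  set D := PowerSeries.derivative ℚ with hD
  have claim1 : ∀ M : ℕ,
      ∑ j ∈ range (p + 1), coeff j (A ^ k) * ((j : ℚ) * coeff (p - j) (A ^ M)) =
      coeff (p - 1) (D (A ^ k) * A ^ M) := by
    intro M
    rw [PowerSeries.coeff_mul, Finset.Nat.sum_antidiagonal_eq_sum_range_succ_mk,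
      (by omega : (p - 1).succ = p), Finset.sum_range_succ' _ p]
    simp only [Nat.cast_zero, zero_mul, mul_zero, add_zero]
    refine Finset.sum_congr rfl fun i hi => ?_
    rw [hD, PowerSeries.coeff_derivative, (by omega : p - (i + 1) = p - 1 - i)]
    push_cast
    ring
  have E1 : (p : ℚ) * coeff p (g ^ k) =
      (k : ℚ) * coeff (p - 1) (A ^ (p + k - 1) * D A) := by
    rw [step2, claim1 p]
    have hDk : D (A ^ k) * A ^ p = k • (A ^ (p + k - 1) * D A) := by
      rw [Derivation.leibniz_pow, smul_mul_assoc, smul_mul_assoc]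
      congr 1
      rw [smul_eq_mul,
        show A ^ (k - 1) * (D A * A ^ p) = A ^ (k - 1) * A ^ p * D A by ring,
        ← pow_add, (by omega : k - 1 + p = p + k - 1)]
    rw [hDk, coeff_smulpow]
  have E2 : (p : ℚ) * coeff p (A ^ (p + k)) =
      ((p : ℚ) + k) * coeff (p - 1) (A ^ (p + k - 1) * D A) := by
    have hcast : ((p - 1 : ℕ) : ℚ) + 1 = p := by
      push_cast [Nat.cast_sub (by omega : 1 ≤ p)]; ring
    have h1 : coeff (p - 1) (D (A ^ (p + k))) = coeff p (A ^ (p + k)) * p := by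
      rw [hD, PowerSeries.coeff_derivative, (by omega : p - 1 + 1 = p), hcast]
    have h2 : D (A ^ (p + k)) = (p + k) • (A ^ (p + k - 1) * D A) := by
      rw [Derivation.leibniz_pow]
      congr 1
    rw [h2, coeff_smulpow] at h1
    push_cast at h1
    linarith [h1]
  have hpne : (p : ℚ) ≠ 0 := Nat.cast_ne_zero.2 (by omega)
  apply mul_left_cancel₀ hpne
  linear_combination ((p : ℚ) + k) * E1 - (k : ℚ) * E2

lemma coeff_pow_congr (u v : PowerSeries ℚ) (n : ℕ)
    (h : ∀ j ≤ n, coeff j u = coeff j v) (M : ℕ) :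
    ∀ j ≤ n, coeff j (u ^ M) = coeff j (v ^ M) := by
  induction M with
  | zero => intro j hj; rfl
  | succ M ih =>
    intro j hj
    rw [pow_succ, pow_succ, PowerSeries.coeff_mul, PowerSeries.coeff_mul]
    refine Finset.sum_congr rfl fun x hx => ?_
    rw [Finset.HasAntidiagonal.mem_antidiagonal] at hx
    rw [ih x.1 (by omega), h x.2 (by omega)]

lemma coeff_pow_multinomial (A : PowerSeries ℚ) (n M : ℕ) :
    coeff n (A ^ M) =
      ∑ k ∈ (piAntidiag (range (n + 1)) M).filter
          (fun k => ∑ i ∈ range (n + 1), i * k i = n),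
        (Nat.multinomial (range (n + 1)) k : ℚ) *
          ∏ i ∈ range (n + 1), (coeff i A) ^ k i := by
  set T : PowerSeries ℚ := ∑ i ∈ range (n + 1), C (coeff i A) * X ^ i with hT
  have hcoeffT : ∀ j ≤ n, coeff j A = coeff j T := by
    intro j hj
    rw [hT, map_sum]
    rw [Finset.sum_congr rfl (fun i _ => coeff_C_mul_X_pow (coeff i A) i j)]
    rw [Finset.sum_ite_eq (range (n + 1)) j (fun i => coeff i A), if_pos (by simp; omega)]
  rw [coeff_pow_congr A T n hcoeffT M n le_rfl, hT,
    Finset.sum_pow_eq_sum_piAntidiag (range (n + 1)) _ M, map_sum, Finset.sum_filter]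
  refine Finset.sum_congr rfl fun k hk => ?_
  have hprod : ∏ i ∈ range (n + 1), (C (coeff i A) * X ^ i) ^ k i =
      C (∏ i ∈ range (n + 1), (coeff i A) ^ k i) *
        X ^ (∑ i ∈ range (n + 1), i * k i) := by
    rw [map_prod, ← Finset.prod_pow_eq_pow_sum, ← Finset.prod_mul_distrib]
    refine Finset.prod_congr rfl fun i _ => ?_
    rw [mul_pow, map_pow, ← pow_mul]
  rw [hprod, ← map_natCast C (Nat.multinomial (range (n + 1)) k), ← mul_assoc, ← map_mul,
    coeff_C_mul_X_pow]
  split_ifs with h1 h2 h2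
  · ring
  · exact absurd h1.symm h2
  · exact absurd h2.symm h1
  · rfl

lemma prod_shift {M : Type*} [CommMonoid M] (n : ℕ) (F : ℕ → M) :
    ∏ i ∈ range (n + 1), F i = F 0 * ∏ i : Fin n, F ((i : ℕ) + 1) := by
  rw [Finset.prod_range_succ' F n, ← Finset.prod_range fun i => F (i + 1)]
  exact mul_comm _ _

lemma sum_shift (n : ℕ) (F : ℕ → ℕ) :
    ∑ i ∈ range (n + 1), F i = F 0 + ∑ i : Fin n, F ((i : ℕ) + 1) := by
  rw [Finset.sum_range_succ' F n, ← Finset.sum_range fun i => F (i + 1)]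
  exact add_comm _ _

theorem stmt_17 (g A : PowerSeries ℚ) (hg0 : constantCoeff g = 1)
    (hA0 : constantCoeff A = 1) (hA : g = pscomp A (X * g)) :
    ∀ n m : ℕ, 1 ≤ n → 1 ≤ m →
      coeff n (g ^ m) =
        ∑ f ∈ Finset.filter (fun f : Fin n → ℕ => ∑ i : Fin n, ((i : ℕ) + 1) * f i = n)
            (Fintype.piFinset fun _ => Finset.range (n + 1)),
          (let q := ∑ i, f i
           (m : ℚ) * (m + n - 1).factorial /
             ((∏ i, ((f i).factorial : ℚ)) * (m + n - q).factorial)) *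
          ∏ i : Fin n, (coeff ((i : ℕ) + 1) A) ^ f i := by
  intro n m hn hm
  have hL := lagrange g A hg0 hA0 hA n m hm
  rw [coeff_pow_multinomial A n (n + m)] at hL
  have hMne : ((n : ℚ) + m) ≠ 0 := by
    have : ((n + m : ℕ) : ℚ) ≠ 0 := Nat.cast_ne_zero.2 (by omega)
    push_cast at this; exact this
  apply mul_left_cancel₀ hMne
  rw [hL, Finset.mul_sum, Finset.mul_sum]
  refine Finset.sum_nbij' (fun k (i : Fin n) => k ((i : ℕ) + 1))
    (fun f j => if hj : 1 ≤ j ∧ j ≤ n then f ⟨j - 1, by omega⟩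
      else if j = 0 then (n + m) - ∑ i, f i else 0) ?_ ?_ ?_ ?_ ?_
  · -- maps into the Fin-side set
    intro k hk
    simp only [Finset.mem_filter, mem_piAntidiag] at hk
    obtain ⟨⟨hk1, hk2⟩, hk3⟩ := hk
    rw [sum_shift] at hk3
    simp only [mul_zero, zero_mul, zero_add] at hk3
    simp only [Finset.mem_filter, Fintype.mem_piFinset, mem_range]
    refine ⟨fun i => ?_, hk3⟩
    have h1 := Finset.single_le_sum (f := fun i : Fin n => ((i : ℕ) + 1) * k ((i : ℕ) + 1))
      (fun _ _ => Nat.zero_le _) (Finset.mem_univ i)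
    have h2 : k ((i : ℕ) + 1) ≤ ((i : ℕ) + 1) * k ((i : ℕ) + 1) :=
      Nat.le_mul_of_pos_left _ (by omega)
    beta_reduce at h1 h2
    omega
  · -- maps back
    intro f hf
    simp only [Finset.mem_filter, Fintype.mem_piFinset, mem_range] at hf
    obtain ⟨hf1, hf2⟩ := hf
    have hq : (∑ i, f i) ≤ n := by
      have h1 := Finset.sum_le_sum (s := (univ : Finset (Fin n))) (f := fun i => f i)
        (g := fun i : Fin n => ((i : ℕ) + 1) * f i)
        (fun i _ => Nat.le_mul_of_pos_left _ (by omega))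
      beta_reduce at h1
      omega
    simp only [Finset.mem_filter, mem_piAntidiag]
    refine ⟨⟨?_, ?_⟩, ?_⟩
    · rw [sum_shift]
      have h0 : (if hj : 1 ≤ 0 ∧ 0 ≤ n then f ⟨0 - 1, by omega⟩
          else if 0 = 0 then (n + m) - ∑ i, f i else 0) = (n + m) - ∑ i, f i := by
        simp
      rw [h0]
      have hrest : ∀ i : Fin n, (if hj : 1 ≤ (i : ℕ) + 1 ∧ (i : ℕ) + 1 ≤ n
          then f ⟨(i : ℕ) + 1 - 1, by omega⟩
          else if (i : ℕ) + 1 = 0 then (n + m) - ∑ i, f i else 0) = f i := by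
        intro i
        rw [dif_pos ⟨by omega, by omega⟩]
        exact congrArg f (by ext; simp)
      rw [Finset.sum_congr rfl fun i _ => hrest i]
      exact Nat.sub_add_cancel (le_trans hq (Nat.le_add_right n m))
    · intro j hj
      by_contra hjn
      simp only [mem_range, not_lt] at hjn
      rw [dif_neg (by omega), if_neg (by omega)] at hj
      exact hj rfl
    · refine Eq.trans ?_ hf2
      rw [sum_shift]
      simp only [mul_zero, zero_mul, zero_add]
      refine Finset.sum_congr rfl fun i _ => ?_
      rw [dif_pos ⟨by omega, by omega⟩]
      exact congrArg (fun t => ((i : ℕ) + 1) * t) (congrArg f (by ext; simp))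
  · -- left inverse
    intro k hk
    simp only [Finset.mem_filter, mem_piAntidiag] at hk
    obtain ⟨⟨hk1, hk2⟩, hk3⟩ := hk
    funext j
    beta_reduce
    have hk1' : k 0 + ∑ i : Fin n, k ((i : ℕ) + 1) = n + m := by
      rw [← sum_shift]; exact hk1
    rcases Nat.lt_or_ge j 1 with hj | hj
    · have hj0 : j = 0 := by omega
      subst hj0
      rw [dif_neg (by omega), if_pos rfl]
      omega
    · rcases Nat.lt_or_ge n j with hjn | hjn
      · rw [dif_neg (by omega), if_neg (by omega)]
        by_contra hne
        have := hk2 j (Ne.symm hne)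
        simp only [mem_range] at this
        omega
      · rw [dif_pos ⟨hj, hjn⟩]
        exact congrArg k (by show j - 1 + 1 = j; omega)
  · -- right inverse
    intro f hf
    funext i
    beta_reduce
    rw [dif_pos ⟨by omega, by omega⟩]
    exact congrArg f (by ext; simp)
  · -- values agree
    intro k hk
    simp only [Finset.mem_filter, mem_piAntidiag] at hk
    obtain ⟨⟨hk1, hk2⟩, hk3⟩ := hk
    beta_reduce
    set q := ∑ i : Fin n, k ((i : ℕ) + 1) with hqdef
    dsimp only
    have hk1' : k 0 + q = n + m := by rw [hqdef, ← sum_shift]; exact hk1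
    have hk0 : k 0 = m + n - q := by omega
    have hprodA : ∏ i ∈ range (n + 1), coeff i A ^ k i
        = ∏ i : Fin n, coeff ((i : ℕ) + 1) A ^ k ((i : ℕ) + 1) := by
      rw [prod_shift n fun i => coeff i A ^ k i]
      simp only [coeff_zero_eq_constantCoeff, hA0, one_pow, one_mul]
    have hfactsplit : (∏ i ∈ range (n + 1), (k i).factorial)
        = (m + n - q).factorial * ∏ i : Fin n, (k ((i : ℕ) + 1)).factorial := by
      rw [prod_shift n fun i => (k i).factorial, hk0]
    have hspec := Nat.multinomial_spec (range (n + 1)) k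
    rw [hk1, hfactsplit] at hspec
    have hMfact : (n + m) * (m + n - 1).factorial = (n + m).factorial := by
      have := Nat.mul_factorial_pred (n := n + m) (by omega)
      rwa [(by omega : n + m - 1 = m + n - 1)] at this
    have hspecQ : ((m + n - q).factorial : ℚ) * (∏ i : Fin n, ((k ((i : ℕ) + 1)).factorial : ℚ))
        * (Nat.multinomial (range (n + 1)) k : ℚ) = ((n + m).factorial : ℚ) := by
      exact_mod_cast congrArg (Nat.cast : ℕ → ℚ) hspec
    have hMfactQ : ((n : ℚ) + m) * ((m + n - 1).factorial : ℚ) = ((n + m).factorial : ℚ) := by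
      exact_mod_cast congrArg (Nat.cast : ℕ → ℚ) hMfact
    have hPne : (∏ i : Fin n, ((k ((i : ℕ) + 1)).factorial : ℚ)) ≠ 0 :=
      Finset.prod_ne_zero_iff.2 fun i _ =>
        Nat.cast_ne_zero.2 (Nat.factorial_pos _).ne'
    have hFqne : (((m + n - q).factorial : ℕ) : ℚ) ≠ 0 :=
      Nat.cast_ne_zero.2 (Nat.factorial_pos _).ne'
    rw [hprodA]
    field_simp
    linear_combination ((∏ i : Fin n, coeff ((i : ℕ) + 1) A ^ k ((i : ℕ) + 1))) * hspecQ
      - ((∏ i : Fin n, coeff ((i : ℕ) + 1) A ^ k ((i : ℕ) + 1))) * hMfactQ
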